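/- Let R : ℝ → (ℝⁿ →L[ℝ] ℝⁿ) be continuous and y : ℝ → ℝⁿ twice differentiable with y''(t) + R(t) y(t) = 0. Then the function V² := ‖y‖²·‖y'‖² − ⟨y, y'⟩² is differentiable and satisfies (V²)'(t) = −2·( ⟨R(t) y(t), y'(t)⟩·‖y(t)‖² − ⟨R(t) y(t), y(t)⟩·⟨y(t), y'(t)⟩ ) for every t. -/

import Mathlib

open scoped InnerProductSpace

/-- For a solution of the Jacobi ODE `y'' + R(t) y = 0`, the function
`V² = ‖y‖²·‖y'‖² − ⟨y, y'⟩²` is differentiable with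
`(V²)'(t) = −2·(⟨R(t)y, y'⟩·‖y‖² − ⟨R(t)y, y⟩·⟨y, y'⟩)`. -/
theorem stmt_4 {n : ℕ}
    (R : ℝ → EuclideanSpace ℝ (Fin n) →L[ℝ] EuclideanSpace ℝ (Fin n))
    (hRcont : Continuous R)
    (y y' y'' : ℝ → EuclideanSpace ℝ (Fin n))
    (hy : ∀ t, HasDerivAt y (y' t) t) (hy' : ∀ t, HasDerivAt y' (y'' t) t)
    (hode : ∀ t, y'' t + R t (y t) = 0) :
    ∀ t, HasDerivAt (fun s => ‖y s‖ ^ 2 * ‖y' s‖ ^ 2 - ⟪y s, y' s⟫_ℝ ^ 2)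
      (-2 * (⟪R t (y t), y' t⟫_ℝ * ‖y t‖ ^ 2 - ⟪R t (y t), y t⟫_ℝ * ⟪y t, y' t⟫_ℝ)) t := by
  intro t
  have hyt : y'' t = -(R t (y t)) := eq_neg_of_add_eq_zero_left (hode t)
  have h1 : HasDerivAt (fun s => ⟪y s, y s⟫_ℝ) (⟪y t, y' t⟫_ℝ + ⟪y' t, y t⟫_ℝ) t :=
    (hy t).inner ℝ (hy t)
  have h2 : HasDerivAt (fun s => ⟪y' s, y' s⟫_ℝ) (⟪y' t, y'' t⟫_ℝ + ⟪y'' t, y' t⟫_ℝ) t :=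
    (hy' t).inner ℝ (hy' t)
  have h3 : HasDerivAt (fun s => ⟪y s, y' s⟫_ℝ) (⟪y t, y'' t⟫_ℝ + ⟪y' t, y' t⟫_ℝ) t :=
    (hy t).inner ℝ (hy' t)
  have h := (h1.mul h2).sub (h3.mul h3)
  have heq : (fun s => ‖y s‖ ^ 2 * ‖y' s‖ ^ 2 - ⟪y s, y' s⟫_ℝ ^ 2)
      = (fun s => ⟪y s, y s⟫_ℝ * ⟪y' s, y' s⟫_ℝ - ⟪y s, y' s⟫_ℝ * ⟪y s, y' s⟫_ℝ) := by
    funext s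
    rw [real_inner_self_eq_norm_sq, real_inner_self_eq_norm_sq]
    ring
  rw [heq]
  refine h.congr_deriv ?_
  rw [hyt]
  simp only [inner_neg_right, inner_neg_left]
  rw [real_inner_comm (y' t) (y t), real_inner_comm (y' t) (R t (y t)),
    real_inner_comm (y t) (R t (y t))]
  simp only [real_inner_self_eq_norm_sq]
  ring
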